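/- arXiv:1403.3313 — 4 statements merged into one kernel-verified Lean document; each statement's English description precedes it below -/
import Mathlib

section
/- Let f : [0,∞) → ℝ be measurable of exponential order k and let F(ξ) be its bicomplex Laplace transform on the region D = {ξ₁e₁ + ξ₂e₂ : Re ξ₁ > k, Re ξ₂ > k}. Then F(ξ) → 0 as Re(ξ₁) → ∞ and Re(ξ₂) → ∞; more precisely, ‖F(ξ₁e₁+ξ₂e₂)‖ ≤ M(1/(Re ξ₁ - k) + 1/(Re ξ₂ - k)) whenever |f(t)| ≤ Me^{kt}. -/
open MeasureTheory Set

noncomputable section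

/-- Bicomplex numbers, modeled in idempotent coordinates as pairs `(ξ₁, ξ₂)` of
complex numbers (multiplication on `ℂ × ℂ` is componentwise, which is exactly
bicomplex multiplication in idempotent coordinates). -/
abbrev C2 := ℂ × ℂ

namespace C2

/-- The imaginary unit `i₁` of the bicomplex numbers. -/
def i1 : C2 := (Complex.I, Complex.I)

/-- The imaginary unit `i₂` of the bicomplex numbers. -/
def i2 : C2 := (-Complex.I, Complex.I)

/-- The idempotent `e₁ = (1 + i₁i₂)/2`. -/
def e1 : C2 := (1 + i1 * i2) / 2

/-- The idempotent `e₂ = (1 - i₁i₂)/2`. -/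
def e2 : C2 := (1 - i1 * i2) / 2

/-- Embedding of `ℂ` (the `i₁`-copy of the complex numbers) into `C2`. -/
def oc (z : ℂ) : C2 := (z, z)

/-- The bicomplex number `z₁ + i₂ z₂`. -/
def bmk (z₁ z₂ : ℂ) : C2 := oc z₁ + oc z₂ * i2

/-- First idempotent projection. -/
def P1 (ξ : C2) : ℂ := ξ.1

/-- Second idempotent projection. -/
def P2 (ξ : C2) : ℂ := ξ.2

/-- First cartesian component: `z₁` in `ξ = z₁ + i₂ z₂`. -/
def z1 (ξ : C2) : ℂ := (ξ.1 + ξ.2) / 2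

/-- Second cartesian component: `z₂` in `ξ = z₁ + i₂ z₂`. -/
def z2 (ξ : C2) : ℂ := Complex.I * (ξ.1 - ξ.2) / 2

/-- The bicomplex (Euclidean) norm `‖z₁ + i₂ z₂‖ = √(|z₁|² + |z₂|²)`. -/
def bnorm (ξ : C2) : ℝ := Real.sqrt (‖z1 ξ‖ ^ 2 + ‖z2 ξ‖ ^ 2)

/-- The bicomplex exponential (computed via idempotent components). -/
def bexp (ξ : C2) : C2 := (Complex.exp ξ.1, Complex.exp ξ.2)

/-- The bicomplex Laplace transform `F(ξ) = ∫₀^∞ f(t) e^{-ξt} dt`. -/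
def laplace (f : ℝ → ℝ) (ξ : C2) : C2 := ∫ t in Set.Ici (0 : ℝ), f t • bexp (-(t • ξ))

end C2

open C2

lemma exp_int (b : ℝ) (hb : 0 < b) :
    (∫ x in Ioi (0:ℝ), Real.exp (-b * x)) = b⁻¹ := by
  have h := integral_comp_mul_left_Ioi (fun x => Real.exp (-x)) 0 hb
  simp only [neg_mul, mul_zero, smul_eq_mul] at h ⊢
  rw [h, integral_exp_neg_Ioi_zero, mul_one]

lemma aux_integrable (f : ℝ → ℝ) (k M : ℝ) (hf : Measurable f)
    (hord : ∀ t ≥ 0, |f t| ≤ M * Real.exp (k * t)) (ξ : ℂ) (h : k < ξ.re) :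
    IntegrableOn (fun t => f t • Complex.exp (-(t • ξ))) (Ici (0:ℝ)) := by
  rw [integrableOn_Ici_iff_integrableOn_Ioi]
  apply Integrable.mono' (g := fun t => M * Real.exp (-(ξ.re - k) * t))
  · exact ((exp_neg_integrableOn_Ioi 0 (by linarith : (0:ℝ) < ξ.re - k)).const_mul M)
  · apply Measurable.aestronglyMeasurable
    fun_prop
  · filter_upwards [ae_restrict_mem measurableSet_Ioi] with t ht
    have ht0 : (0:ℝ) ≤ t := le_of_lt ht
    have : ‖f t • Complex.exp (-(t • ξ))‖ = |f t| * Real.exp (-(t * ξ.re)) := by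
      rw [norm_smul, Complex.norm_exp]
      simp [Complex.smul_re]
    rw [this]
    calc |f t| * Real.exp (-(t * ξ.re))
        ≤ (M * Real.exp (k * t)) * Real.exp (-(t * ξ.re)) := by
          apply mul_le_mul_of_nonneg_right (hord t ht0) (Real.exp_nonneg _)
      _ = M * Real.exp (-(ξ.re - k) * t) := by
          rw [mul_assoc, ← Real.exp_add]; ring_nf

lemma aux_abs (f : ℝ → ℝ) (k M : ℝ) (hf : Measurable f)
    (hord : ∀ t ≥ 0, |f t| ≤ M * Real.exp (k * t)) (ξ : ℂ) (h : k < ξ.re) :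
    ‖∫ t in Ici (0:ℝ), f t • Complex.exp (-(t • ξ))‖ ≤ M / (ξ.re - k) := by
  have hb : (0:ℝ) < ξ.re - k := by linarith
  have hint := aux_integrable f k M hf hord ξ h
  calc ‖∫ t in Ici (0:ℝ), f t • Complex.exp (-(t • ξ))‖
      ≤ ∫ t in Ici (0:ℝ), ‖f t • Complex.exp (-(t • ξ))‖ :=
        by exact norm_integral_le_integral_norm _
    _ ≤ ∫ t in Ici (0:ℝ), M * Real.exp (-(ξ.re - k) * t) := by
        apply setIntegral_mono_on hint.norm
        · exact by
            rw [integrableOn_Ici_iff_integrableOn_Ioi]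
            exact (exp_neg_integrableOn_Ioi 0 hb).const_mul M
        · exact measurableSet_Ici
        · intro t ht
          have : ‖f t • Complex.exp (-(t • ξ))‖ = |f t| * Real.exp (-(t * ξ.re)) := by
            rw [norm_smul, Complex.norm_exp]
            simp [Complex.smul_re]
          rw [this]
          calc |f t| * Real.exp (-(t * ξ.re))
              ≤ (M * Real.exp (k * t)) * Real.exp (-(t * ξ.re)) :=
                mul_le_mul_of_nonneg_right (hord t ht) (Real.exp_nonneg _)
            _ = M * Real.exp (-(ξ.re - k) * t) := by
                rw [mul_assoc, ← Real.exp_add]; ring_nf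
    _ = M * (ξ.re - k)⁻¹ := by
        rw [integral_Ici_eq_integral_Ioi, integral_const_mul, exp_int _ hb]
    _ = M / (ξ.re - k) := by ring

theorem stmt12 (f : ℝ → ℝ) (k M : ℝ) (hf : Measurable f) (hM : 0 < M)
    (hord : ∀ t ≥ 0, |f t| ≤ M * Real.exp (k * t))
    (ξ₁ ξ₂ : ℂ) (h1 : k < ξ₁.re) (h2 : k < ξ₂.re) :
    bnorm (laplace f (oc ξ₁ * e1 + oc ξ₂ * e2)) ≤
      M * (1 / (ξ₁.re - k) + 1 / (ξ₂.re - k)) := by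
  have he : oc ξ₁ * e1 + oc ξ₂ * e2 = ((ξ₁, ξ₂) : C2) := by
    simp only [oc, e1, e2, i1, i2, Prod.ext_iff, Prod.fst_mul, Prod.snd_mul, Prod.fst_add,
      Prod.snd_add, Prod.fst_div, Prod.snd_div, Prod.fst_one, Prod.snd_one, Prod.fst_neg,
      Prod.snd_neg, Prod.fst_sub, Prod.snd_sub, Prod.fst_ofNat, Prod.snd_ofNat]
    constructor <;> field_simp <;> simp [Complex.I_sq] <;> ring_nf <;> simp
  rw [he]
  have hpt : (fun t : ℝ => f t • bexp (-(t • ((ξ₁, ξ₂) : C2)))) =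
      fun t => (f t • Complex.exp (-(t • ξ₁)), f t • Complex.exp (-(t • ξ₂))) := by
    funext t
    simp [bexp, Prod.smul_def, Prod.ext_iff]
  have hi1 := aux_integrable f k M hf hord ξ₁ h1
  have hi2 := aux_integrable f k M hf hord ξ₂ h2
  have hlap : laplace f ((ξ₁, ξ₂) : C2) =
      (∫ t in Ici (0:ℝ), f t • Complex.exp (-(t • ξ₁)),
       ∫ t in Ici (0:ℝ), f t • Complex.exp (-(t • ξ₂))) := by
    rw [laplace, hpt]
    exact integral_pair hi1 hi2
  set F₁ := ∫ t in Ici (0:ℝ), f t • Complex.exp (-(t • ξ₁))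
  set F₂ := ∫ t in Ici (0:ℝ), f t • Complex.exp (-(t • ξ₂))
  have hb1 := aux_abs f k M hf hord ξ₁ h1
  have hb2 := aux_abs f k M hf hord ξ₂ h2
  rw [hlap]
  have key : bnorm ((F₁, F₂) : C2) ≤ ‖F₁‖ + ‖F₂‖ := by
    rw [bnorm]
    have hz1 : ‖z1 ((F₁, F₂) : C2)‖ ≤ (‖F₁‖ + ‖F₂‖) / 2 := by
      rw [z1]
      calc ‖(F₁ + F₂) / 2‖ = ‖F₁ + F₂‖ / 2 := by
            rw [norm_div]; norm_num
        _ ≤ (‖F₁‖ + ‖F₂‖) / 2 := by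
            gcongr; exact norm_add_le _ _
    have hz2 : ‖z2 ((F₁, F₂) : C2)‖ ≤ (‖F₁‖ + ‖F₂‖) / 2 := by
      rw [z2]
      calc ‖Complex.I * (F₁ - F₂) / 2‖ = ‖F₁ - F₂‖ / 2 := by
            rw [norm_div, norm_mul]; norm_num
        _ ≤ (‖F₁‖ + ‖F₂‖) / 2 := by
            gcongr; exact (norm_sub_le F₁ F₂ : _)
    set s := ‖F₁‖ + ‖F₂‖ with hs
    have hs0 : 0 ≤ s := by positivity
    have hle : ‖z1 ((F₁, F₂) : C2)‖ ^ 2 + ‖z2 ((F₁, F₂) : C2)‖ ^ 2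
        ≤ s ^ 2 := by
      have h1 : ‖z1 ((F₁, F₂) : C2)‖ ^ 2 ≤ (s / 2) ^ 2 := by
        apply pow_le_pow_left₀ (norm_nonneg _) hz1
      have h2 : ‖z2 ((F₁, F₂) : C2)‖ ^ 2 ≤ (s / 2) ^ 2 := by
        apply pow_le_pow_left₀ (norm_nonneg _) hz2
      nlinarith [sq_nonneg s]
    calc Real.sqrt (‖z1 ((F₁, F₂) : C2)‖ ^ 2 + ‖z2 ((F₁, F₂) : C2)‖ ^ 2)
        ≤ Real.sqrt (s ^ 2) := Real.sqrt_le_sqrt hle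
      _ = s := Real.sqrt_sq hs0
  calc bnorm ((F₁, F₂) : C2) ≤ ‖F₁‖ + ‖F₂‖ := key
    _ ≤ M / (ξ₁.re - k) + M / (ξ₂.re - k) := add_le_add hb1 hb2
    _ = M * (1 / (ξ₁.re - k) + 1 / (ξ₂.re - k)) := by ring
end
end

section
/- For ω ∈ ℝ, the bicomplex Laplace transform of f(t) = cos(ωt) equals ξ(ξ² + ω²)⁻¹ for all ξ = ξ₁e₁ + ξ₂e₂ with Re(ξ₁) > 0, Re(ξ₂) > 0 and ξ² + ω² invertible. -/
open MeasureTheory Set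

noncomputable section

open C2

namespace Aux

lemma integrable_cexp (c : ℂ) (hc : c.re < 0) :
    IntegrableOn (fun t : ℝ => Complex.exp (c * t)) (Ioi 0) := by
  have h := exp_neg_integrableOn_Ioi 0 (b := -c.re) (by linarith)
  refine h.mono' ?_ ?_
  · exact (Complex.measurable_exp.comp (measurable_const.mul Complex.measurable_ofReal)).aestronglyMeasurable
  · filter_upwards with t
    rw [Complex.norm_exp]
    simp [Complex.mul_re]

lemma integral_cexp (c : ℂ) (hc : c.re < 0) :
    ∫ t : ℝ in Ioi 0, Complex.exp (c * t) = -c⁻¹ := by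
  have hc0 : c ≠ 0 := fun h => by simp [h] at hc
  have := integral_Ioi_of_hasDerivAt_of_tendsto (a := (0:ℝ))
      (f := fun t : ℝ => Complex.exp (c * t) / c)
      (f' := fun t : ℝ => Complex.exp (c * t)) (m := 0)
      ?_ ?_ (integrable_cexp c hc) ?_
  · rw [this]; simp [hc0, div_eq_mul_inv]
  · exact Continuous.continuousWithinAt (by fun_prop)
  · intro x _
    have : HasDerivAt (fun t : ℝ => Complex.exp (c * t)) (Complex.exp (c * x) * c) x := by
      have h1 : HasDerivAt (fun t : ℝ => c * (t : ℂ)) c x := by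
        simpa using (Complex.ofRealCLM.hasDerivAt (x := x)).const_mul c
      simpa [mul_comm] using h1.cexp
    simpa [mul_div_assoc, mul_div_cancel_right₀ _ hc0] using this.div_const c
  · rw [show (0:ℂ) = 0 / c by simp]
    apply Filter.Tendsto.div_const
    rw [tendsto_zero_iff_norm_tendsto_zero]
    have : (fun t : ℝ => ‖Complex.exp (c * t)‖) = fun t : ℝ => Real.exp (c.re * t) := by
      ext t; rw [Complex.norm_exp]; simp [Complex.mul_re]
    rw [this]
    exact Real.tendsto_exp_atBot.comp ((Filter.tendsto_const_mul_atBot_of_neg hc).mpr Filter.tendsto_id)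

lemma rew (ω : ℝ) (ξ : ℂ) (t : ℝ) :
    Real.cos (ω * t) • Complex.exp (-(t • ξ)) =
      (Complex.exp ((Complex.I * ω - ξ) * t) + Complex.exp ((-(Complex.I * ω) - ξ) * t)) / 2 := by
  rw [Complex.real_smul, Complex.ofReal_cos, Complex.cos, Complex.real_smul,
    div_mul_eq_mul_div, add_mul, ← Complex.exp_add, ← Complex.exp_add]
  push_cast
  ring_nf

lemma integrable_cos_cexp (ω : ℝ) (ξ : ℂ) (hξ : 0 < ξ.re) :
    IntegrableOn (fun t : ℝ => Real.cos (ω * t) • Complex.exp (-(t • ξ))) (Ici 0) := by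
  rw [integrableOn_Ici_iff_integrableOn_Ioi]
  simp only [rew]
  have h1 : ((Complex.I * ω - ξ)).re < 0 := by simp [hξ]
  have h2 : ((-(Complex.I * ω) - ξ)).re < 0 := by simp [hξ]
  exact ((integrable_cexp _ h1).add (integrable_cexp _ h2)).div_const 2

lemma laplace_cos_complex (ω : ℝ) (ξ : ℂ) (hξ : 0 < ξ.re)
    (hne : ξ ^ 2 + (ω : ℂ) ^ 2 ≠ 0) :
    ∫ t in Set.Ici (0 : ℝ), Real.cos (ω * t) • Complex.exp (-(t • ξ)) =
      ξ * (ξ ^ 2 + (ω : ℂ) ^ 2)⁻¹ := by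
  have h1 : ((Complex.I * ω - ξ)).re < 0 := by simp [hξ]
  have h2 : ((-(Complex.I * ω) - ξ)).re < 0 := by simp [hξ]
  have hab : (ξ - Complex.I * ω) * (ξ + Complex.I * ω) = ξ ^ 2 + (ω : ℂ) ^ 2 := by
    linear_combination -(ω : ℂ) ^ 2 * Complex.I_sq
  have ha : ξ - Complex.I * ω ≠ 0 := fun h => hne (hab ▸ by rw [h, zero_mul])
  have hb : ξ + Complex.I * ω ≠ 0 := fun h => hne (hab ▸ by rw [h, mul_zero])
  rw [MeasureTheory.integral_Ici_eq_integral_Ioi]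
  simp only [rew]
  rw [integral_div, MeasureTheory.integral_add (integrable_cexp _ h1) (integrable_cexp _ h2),
    integral_cexp _ h1, integral_cexp _ h2]
  rw [show -(Complex.I * ↑ω - ξ)⁻¹ = (ξ - Complex.I * ω)⁻¹ by rw [← inv_neg, neg_sub],
    show -(-(Complex.I * ↑ω) - ξ)⁻¹ = (ξ + Complex.I * ω)⁻¹ by rw [← inv_neg]; ring_nf]
  rw [inv_add_inv ha hb, hab]
  rw [show ξ - Complex.I * ω + (ξ + Complex.I * ω) = 2 * ξ by ring]
  field_simp

end Aux


theorem stmt15 (ω : ℝ) (ξ₁ ξ₂ : ℂ) (h1 : 0 < ξ₁.re) (h2 : 0 < ξ₂.re)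
    (hu : IsUnit ((oc ξ₁ * e1 + oc ξ₂ * e2) ^ 2 + oc (ω : ℂ) ^ 2)) :
    laplace (fun t => Real.cos (ω * t)) (oc ξ₁ * e1 + oc ξ₂ * e2) =
      (oc ξ₁ * e1 + oc ξ₂ * e2) * ((oc ξ₁ * e1 + oc ξ₂ * e2) ^ 2 + oc (ω : ℂ) ^ 2)⁻¹ := by
  have hΞ : oc ξ₁ * e1 + oc ξ₂ * e2 = ((ξ₁, ξ₂) : C2) := by
    simp only [oc, e1, e2, i1, i2, Prod.ext_iff, Prod.fst_mul, Prod.snd_mul, Prod.fst_add,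
      Prod.snd_add, Prod.fst_div, Prod.snd_div, Prod.fst_one, Prod.snd_one, Prod.fst_neg,
      Prod.snd_neg, Prod.fst_sub, Prod.snd_sub, Prod.fst_ofNat, Prod.snd_ofNat]
    constructor
    · field_simp; linear_combination (-ξ₁ + ξ₂) * Complex.I_sq
    · field_simp; linear_combination (ξ₁ - ξ₂) * Complex.I_sq
  rw [hΞ] at hu ⊢
  have hu1 : ξ₁ ^ 2 + (ω : ℂ) ^ 2 ≠ 0 := by
    have := hu.map (RingHom.fst ℂ ℂ)
    simpa [oc, isUnit_iff_ne_zero] using this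
  have hu2 : ξ₂ ^ 2 + (ω : ℂ) ^ 2 ≠ 0 := by
    have := hu.map (RingHom.snd ℂ ℂ)
    simpa [oc, isUnit_iff_ne_zero] using this
  have hint : (fun t : ℝ => Real.cos (ω * t) • bexp (-(t • ((ξ₁, ξ₂) : C2)))) =
      fun t : ℝ => ((Real.cos (ω * t) • Complex.exp (-(t • ξ₁)),
        Real.cos (ω * t) • Complex.exp (-(t • ξ₂))) : C2) := by
    funext t
    simp [bexp, Prod.smul_def, Prod.ext_iff]
  rw [laplace, hint, integral_pair (Aux.integrable_cos_cexp ω ξ₁ h1)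
    (Aux.integrable_cos_cexp ω ξ₂ h2)]
  rw [Aux.laplace_cos_complex ω ξ₁ h1 hu1, Aux.laplace_cos_complex ω ξ₂ h2 hu2]
  simp [oc, Prod.ext_iff, Prod.fst_inv, Prod.snd_inv]
end
end

section
/- For a, ω ∈ ℝ, the bicomplex Laplace transform of f(t) = e^{-at}cos(ωt) equals (ξ + a)((ξ+a)² + ω²)⁻¹ for all ξ = ξ₁e₁ + ξ₂e₂ with Re(ξ₁) > -a, Re(ξ₂) > -a and (ξ+a)² + ω² invertible. -/
open MeasureTheory Set

noncomputable section

open C2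




lemma integrableOn_cexp_Ioi (c : ℂ) (hc : c.re < 0) :
    MeasureTheory.IntegrableOn (fun t : ℝ => Complex.exp (c * t)) (Ioi (0:ℝ)) := by
  have hg : MeasureTheory.IntegrableOn (fun t : ℝ => Real.exp (-(-c.re) * t)) (Ioi (0:ℝ)) :=
    exp_neg_integrableOn_Ioi 0 (by linarith)
  refine hg.integrable.mono' ?_ ?_
  · exact (Complex.continuous_exp.comp
      (continuous_const.mul Complex.continuous_ofReal)).aestronglyMeasurable
  · filter_upwards with t
    simp only [Complex.norm_exp, neg_neg]
    rw [Complex.mul_re]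
    simp [Real.exp_le_exp]

lemma integral_cexp_Ioi (c : ℂ) (hc : c.re < 0) :
    ∫ t : ℝ in Ioi (0:ℝ), Complex.exp (c * t) = -c⁻¹ := by
  have hc0 : c ≠ 0 := fun h => by simp [h] at hc
  have hderiv : ∀ x ∈ Ici (0:ℝ), HasDerivAt (fun t : ℝ => Complex.exp (c * t) / c)
      (Complex.exp (c * x)) x := by
    intro x _
    have h1 : HasDerivAt (fun t : ℝ => (t : ℂ)) 1 x := Complex.ofRealCLM.hasDerivAt
    have h2 : HasDerivAt (fun t : ℝ => c * (t : ℂ)) c x := by simpa using h1.const_mul c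
    have h3 := (Complex.hasDerivAt_exp (c * x)).comp x h2
    have h4 := h3.div_const c
    simpa [mul_comm, mul_div_assoc, mul_div_cancel_left₀ _ hc0] using h4
  have htend : Filter.Tendsto (fun t : ℝ => Complex.exp (c * t) / c) Filter.atTop (nhds 0) := by
    rw [show (0:ℂ) = 0 / c by simp]
    apply Filter.Tendsto.div_const
    rw [tendsto_zero_iff_norm_tendsto_zero]
    have hn : (fun t : ℝ => ‖Complex.exp (c * t)‖) = fun t : ℝ => Real.exp (c.re * t) := by
      funext t
      simp [Complex.norm_exp, Complex.mul_re]
    rw [hn]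
    have hb : Filter.Tendsto (fun t : ℝ => c.re * t) Filter.atTop Filter.atBot := by
      have h5 : Filter.Tendsto (fun t : ℝ => (-c.re) * t) Filter.atTop Filter.atTop :=
        Filter.Tendsto.const_mul_atTop (by linarith) Filter.tendsto_id
      have h6 := Filter.tendsto_neg_atTop_atBot.comp h5
      have h7 : (fun t : ℝ => c.re * t) = Neg.neg ∘ fun t : ℝ => -c.re * t := by
        funext t; simp
      rw [h7]; exact h6
    exact Real.tendsto_exp_atBot.comp hb
  have := integral_Ioi_of_hasDerivAt_of_tendsto' hderiv (integrableOn_cexp_Ioi c hc) htend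
  simpa [div_eq_mul_inv] using this

lemma integrable_aux (a ω : ℝ) (s : ℂ) (h : -a < s.re) :
    MeasureTheory.IntegrableOn
      (fun t : ℝ => (Real.exp (-a * t) * Real.cos (ω * t)) • Complex.exp (-(t * s)))
      (Ioi (0:ℝ)) := by
  have hg : MeasureTheory.IntegrableOn (fun t : ℝ => Real.exp (-(a + s.re) * t)) (Ioi (0:ℝ)) :=
    exp_neg_integrableOn_Ioi 0 (by linarith)
  refine hg.integrable.mono' ?_ ?_
  · apply Continuous.aestronglyMeasurable
    fun_prop
  · filter_upwards with t
    have h1 : ‖(Real.exp (-a * t) * Real.cos (ω * t)) • Complex.exp (-(t * s))‖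
        = |Real.exp (-a * t) * Real.cos (ω * t)| * Real.exp (-(t * s.re)) := by
      rw [norm_smul]
      simp [Complex.norm_exp, Complex.mul_re]
    have h2 : |Real.exp (-a * t) * Real.cos (ω * t)| ≤ Real.exp (-a * t) := by
      rw [abs_mul, abs_of_pos (Real.exp_pos _)]
      nlinarith [Real.abs_cos_le_one (ω * t), Real.exp_pos (-a * t), abs_nonneg (Real.cos (ω * t))]
    rw [h1]
    calc |Real.exp (-a * t) * Real.cos (ω * t)| * Real.exp (-(t * s.re))
        ≤ Real.exp (-a * t) * Real.exp (-(t * s.re)) :=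
          mul_le_mul_of_nonneg_right h2 (Real.exp_pos _).le
      _ = Real.exp (-(a + s.re) * t) := by rw [← Real.exp_add]; ring_nf

lemma laplace_component (a ω : ℝ) (s : ℂ) (h : -a < s.re) :
    ∫ t : ℝ in Ioi (0:ℝ), (Real.exp (-a * t) * Real.cos (ω * t)) • Complex.exp (-(t * s)) =
      (s + a) / ((s + a) ^ 2 + ω ^ 2) := by
  set c₁ : ℂ := -(s + a) + ω * Complex.I with hc₁
  set c₂ : ℂ := -(s + a) - ω * Complex.I with hc₂
  have hre : (0:ℝ) < s.re + a := by linarith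
  have hr₁ : c₁.re = -(s.re + a) := by simp [hc₁]
  have hr₂ : c₂.re = -(s.re + a) := by simp [hc₂]
  have hre₁ : c₁.re < 0 := by rw [hr₁]; linarith
  have hre₂ : c₂.re < 0 := by rw [hr₂]; linarith
  have h₁ : c₁ ≠ 0 := fun hh => by rw [hh] at hre₁; simp at hre₁
  have h₂ : c₂ ≠ 0 := fun hh => by rw [hh] at hre₂; simp at hre₂
  have heq : ∀ t : ℝ, (Real.exp (-a * t) * Real.cos (ω * t)) • Complex.exp (-(t * s)) =
      Complex.exp (c₁ * t) / 2 + Complex.exp (c₂ * t) / 2 := by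
    intro t
    have hc : ((Real.exp (-a * t) * Real.cos (ω * t) : ℝ) : ℂ) =
        Complex.exp (-a * t) * Complex.cos (ω * t) := by
      push_cast [Complex.ofReal_exp, Complex.ofReal_cos]
      norm_cast
    rw [Complex.real_smul, hc, Complex.cos]
    have E1 : Complex.exp (c₁ * t) =
        Complex.exp (-(a:ℂ) * t) * Complex.exp ((ω:ℂ) * t * Complex.I) *
          Complex.exp (-((t:ℂ) * s)) := by
      rw [← Complex.exp_add, ← Complex.exp_add]
      congr 1
      rw [hc₁]; ring
    have E2 : Complex.exp (c₂ * t) =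
        Complex.exp (-(a:ℂ) * t) * Complex.exp (-((ω:ℂ) * t) * Complex.I) *
          Complex.exp (-((t:ℂ) * s)) := by
      rw [← Complex.exp_add, ← Complex.exp_add]
      congr 1
      rw [hc₂]; ring
    rw [E1, E2]; ring
  rw [MeasureTheory.setIntegral_congr_fun measurableSet_Ioi (fun t _ => heq t)]
  rw [MeasureTheory.integral_add ((integrableOn_cexp_Ioi c₁ hre₁).div_const 2)
    ((integrableOn_cexp_Ioi c₂ hre₂).div_const 2),
    MeasureTheory.integral_div, MeasureTheory.integral_div,
    integral_cexp_Ioi c₁ hre₁, integral_cexp_Ioi c₂ hre₂]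
  have hd : ((s + (a:ℂ)) ^ 2 + ((ω:ℂ)) ^ 2) = c₁ * c₂ := by
    rw [hc₁, hc₂]
    linear_combination ((ω:ℂ)) ^ 2 * Complex.I_sq
  have hsum : c₁ + c₂ = -2 * (s + (a:ℂ)) := by rw [hc₁, hc₂]; ring
  have step : -c₁⁻¹ / 2 + -c₂⁻¹ / 2 = -(c₁ + c₂) / (2 * (c₁ * c₂)) := by
    field_simp
    ring
  rw [step, hsum, ← hd, show (-(-2 * (s + (a:ℂ)))) = 2 * (s + (a:ℂ)) by ring]
  exact mul_div_mul_left _ _ (by norm_num)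

theorem stmt16 (a ω : ℝ) (ξ₁ ξ₂ : ℂ) (h1 : -a < ξ₁.re) (h2 : -a < ξ₂.re)
    (hu : IsUnit ((oc ξ₁ * e1 + oc ξ₂ * e2 + oc (a : ℂ)) ^ 2 + oc (ω : ℂ) ^ 2)) :
    laplace (fun t => Real.exp (-a * t) * Real.cos (ω * t)) (oc ξ₁ * e1 + oc ξ₂ * e2) =
      (oc ξ₁ * e1 + oc ξ₂ * e2 + oc (a : ℂ)) *
        ((oc ξ₁ * e1 + oc ξ₂ * e2 + oc (a : ℂ)) ^ 2 + oc (ω : ℂ) ^ 2)⁻¹ := by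
  have he1 : e1 = ((1, 0) : C2) := by
    simp [e1, i1, i2, Prod.ext_iff, Complex.I_mul_I, div_eq_iff]
  have he2 : e2 = ((0, 1) : C2) := by
    simp [e2, i1, i2, Prod.ext_iff, Complex.I_mul_I, div_eq_iff]
  have hξ : oc ξ₁ * e1 + oc ξ₂ * e2 = ((ξ₁, ξ₂) : C2) := by
    simp [he1, he2, oc, Prod.ext_iff]
  rw [hξ]
  have hfun : ∀ t : ℝ, (Real.exp (-a * t) * Real.cos (ω * t)) • bexp (-(t • ((ξ₁, ξ₂) : C2))) =
      ((Real.exp (-a * t) * Real.cos (ω * t)) • Complex.exp (-(t * ξ₁)),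
       (Real.exp (-a * t) * Real.cos (ω * t)) • Complex.exp (-(t * ξ₂))) := by
    intro t
    simp [bexp, Prod.smul_mk, Prod.ext_iff, Complex.real_smul]
  simp only [laplace]
  rw [MeasureTheory.integral_Ici_eq_integral_Ioi,
    MeasureTheory.setIntegral_congr_fun measurableSet_Ioi (fun t _ => hfun t),
    integral_pair (integrable_aux a ω ξ₁ h1) (integrable_aux a ω ξ₂ h2),
    laplace_component a ω ξ₁ h1, laplace_component a ω ξ₂ h2]
  simp [oc, Prod.ext_iff, div_eq_mul_inv, pow_two]
end
end

section
/- For a, ω ∈ ℝ, ω ≠ 0, the bicomplex Laplace transform of f(t) = e^{-at}sin(ωt) equals ω((ξ+a)² + ω²)⁻¹ for all ξ = ξ₁e₁ + ξ₂e₂ with Re(ξ₁) > -a, Re(ξ₂) > -a. -/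
open MeasureTheory Set

noncomputable section

open C2

open Filter in
private lemma stmt17.pointwise (a ω : ℝ) (ξ : ℂ) (t : ℝ) :
    (Real.exp (-a*t) * Real.sin (ω*t)) • Complex.exp (-((t:ℂ) * ξ))
      = (Complex.exp (-((ξ + a - ω * Complex.I) * t)) -
         Complex.exp (-((ξ + a + ω * Complex.I) * t))) / (2*Complex.I) := by
  have e1 : Complex.exp (-((ξ + a - ω * Complex.I) * t))
      = Complex.exp (-(a*t)) * Complex.exp (-((t:ℂ) * ξ)) * Complex.exp (ω*t*Complex.I) := by
    rw [← Complex.exp_add, ← Complex.exp_add]; ring_nf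
  have e2 : Complex.exp (-((ξ + a + ω * Complex.I) * t))
      = Complex.exp (-(a*t)) * Complex.exp (-((t:ℂ) * ξ)) * Complex.exp (-(ω*t*Complex.I)) := by
    rw [← Complex.exp_add, ← Complex.exp_add]; ring_nf
  rw [e1, e2, Complex.real_smul, Complex.ofReal_mul, Complex.ofReal_exp, Complex.ofReal_sin,
    Complex.sin, Complex.ofReal_mul, Complex.ofReal_neg]
  push_cast
  rw [show (-(↑ω * ↑t) * Complex.I : ℂ) = -(↑ω * ↑t * Complex.I) by ring,
    show (-↑a * ↑t : ℂ) = -(↑a * ↑t) by ring]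
  field_simp [Complex.I_ne_zero]
  ring_nf
  rw [Complex.I_sq]
  ring

private lemma stmt17.intOn_cexp (c : ℂ) (hc : 0 < c.re) :
    IntegrableOn (fun t : ℝ => Complex.exp (-(c * t))) (Ioi 0) := by
  apply Integrable.mono' (exp_neg_integrableOn_Ioi 0 hc)
    (Complex.continuous_exp.comp (by continuity)).aestronglyMeasurable
  filter_upwards with t
  rw [Function.comp_apply, Complex.norm_exp]
  simp [mul_comm]

open Filter in
private lemma stmt17.integral_cexp (c : ℂ) (hc : 0 < c.re) :
    ∫ t : ℝ in Ioi 0, Complex.exp (-(c * t)) = 1 / c := by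
  have hc0 : c ≠ 0 := fun h => by simp [h] at hc
  have := MeasureTheory.integral_Ioi_of_hasDerivAt_of_tendsto (a := (0:ℝ))
    (f := fun t : ℝ => -Complex.exp (-(c * t)) / c)
    (f' := fun t : ℝ => Complex.exp (-(c * t))) (m := 0)
    ?_ ?_ ((stmt17.intOn_cexp c hc)) ?_
  · rw [this]; simp; rw [neg_div, neg_neg, one_div]
  · exact ((Complex.continuous_exp.comp
      ((continuous_const.mul Complex.continuous_ofReal).neg)).neg.div_const c).continuousWithinAt
  · intro x _
    have : HasDerivAt (fun t : ℝ => Complex.exp (-(c * t))) (Complex.exp (-(c*x)) * (-c)) x := by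
      have h1 : HasDerivAt (fun t : ℝ => -(c * (t:ℂ))) (-c) x := by
        exact (((Complex.ofRealCLM.hasDerivAt (x := x)).const_mul c).neg).congr_deriv (by simp)
      exact (Complex.hasDerivAt_exp _).comp x h1
    have := (this.neg.div_const c)
    exact this.congr_deriv (by rw [mul_neg, neg_neg, mul_div_assoc, div_self hc0, mul_one])
  · have hnorm : Tendsto (fun t : ℝ => ‖-Complex.exp (-(c * t)) / c‖) atTop (nhds 0) := by
      have : Tendsto (fun t : ℝ => Real.exp (-(c.re * t)) / ‖c‖) atTop (nhds 0) := by
        have h := (Real.tendsto_exp_neg_atTop_nhds_zero.comp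
          (tendsto_id.const_mul_atTop hc)).div_const ‖c‖
        simpa using h
      refine this.congr fun t => ?_
      simp [norm_div, Complex.norm_exp]
    simpa using tendsto_zero_iff_norm_tendsto_zero.mpr hnorm

private lemma stmt17.re1 (a ω : ℝ) (ξ : ℂ) (h : -a < ξ.re) :
    0 < (ξ + a - ω * Complex.I).re := by simp; linarith

private lemma stmt17.re2 (a ω : ℝ) (ξ : ℂ) (h : -a < ξ.re) :
    0 < (ξ + a + ω * Complex.I).re := by simp; linarith

private lemma stmt17.keyInt (a ω : ℝ) (ξ : ℂ) (h : -a < ξ.re) :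
    IntegrableOn (fun t : ℝ =>
      (Real.exp (-a*t) * Real.sin (ω*t)) • Complex.exp (-((t:ℂ) * ξ))) (Ioi 0) := by
  have := (((stmt17.intOn_cexp _ (stmt17.re1 a ω ξ h)).sub
    (stmt17.intOn_cexp _ (stmt17.re2 a ω ξ h))).div_const (2*Complex.I))
  exact IntegrableOn.congr_fun this (fun t _ => (stmt17.pointwise a ω ξ t).symm) measurableSet_Ioi

private lemma stmt17.key (a ω : ℝ) (ξ : ℂ) (h : -a < ξ.re) :
    ∫ t : ℝ in Ioi 0, (Real.exp (-a*t) * Real.sin (ω*t)) • Complex.exp (-((t:ℂ) * ξ))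
      = ω * ((ξ + a)^2 + (ω:ℂ)^2)⁻¹ := by
  have hre : (0:ℝ) < (ξ + a).re := by simp; linarith
  have hc1 : (ξ + a - ω * Complex.I) ≠ 0 := fun hh => by
    have := stmt17.re1 a ω ξ h; rw [hh] at this; simp at this
  have hc2 : (ξ + a + ω * Complex.I) ≠ 0 := fun hh => by
    have := stmt17.re2 a ω ξ h; rw [hh] at this; simp at this
  calc ∫ t : ℝ in Ioi 0, (Real.exp (-a*t) * Real.sin (ω*t)) • Complex.exp (-((t:ℂ) * ξ))
      = ∫ t : ℝ in Ioi 0, (Complex.exp (-((ξ + a - ω * Complex.I) * t)) -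
         Complex.exp (-((ξ + a + ω * Complex.I) * t))) / (2*Complex.I) :=
        setIntegral_congr_fun measurableSet_Ioi fun t _ => stmt17.pointwise a ω ξ t
    _ = ((∫ t : ℝ in Ioi 0, Complex.exp (-((ξ + a - ω * Complex.I) * t))) -
         (∫ t : ℝ in Ioi 0, Complex.exp (-((ξ + a + ω * Complex.I) * t)))) / (2*Complex.I) := by
        rw [integral_div, integral_sub (stmt17.intOn_cexp _ (stmt17.re1 a ω ξ h))
          (stmt17.intOn_cexp _ (stmt17.re2 a ω ξ h))]
    _ = (1 / (ξ + a - ω * Complex.I) - 1 / (ξ + a + ω * Complex.I)) / (2*Complex.I) := by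
        rw [stmt17.integral_cexp _ (stmt17.re1 a ω ξ h),
          stmt17.integral_cexp _ (stmt17.re2 a ω ξ h)]
    _ = ω * ((ξ + a)^2 + (ω:ℂ)^2)⁻¹ := by
        have hsq : ((ξ + a)^2 + (ω:ℂ)^2) = (ξ + a - ω * Complex.I) * (ξ + a + ω * Complex.I) := by
          ring_nf; rw [Complex.I_sq]; ring
        rw [hsq]
        field_simp [Complex.I_ne_zero]
        ring_nf


theorem stmt17 (a ω : ℝ) (hω : ω ≠ 0) (ξ₁ ξ₂ : ℂ) (h1 : -a < ξ₁.re) (h2 : -a < ξ₂.re) :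
    laplace (fun t => Real.exp (-a * t) * Real.sin (ω * t)) (oc ξ₁ * e1 + oc ξ₂ * e2) =
      oc (ω : ℂ) * ((oc ξ₁ * e1 + oc ξ₂ * e2 + oc (a : ℂ)) ^ 2 + oc (ω : ℂ) ^ 2)⁻¹ := by
  have hxi : oc ξ₁ * e1 + oc ξ₂ * e2 = ((ξ₁, ξ₂) : C2) := by
    simp [oc, e1, e2, i1, i2, Prod.ext_iff, Complex.ext_iff]
  rw [hxi]
  have hcomp : ∀ t : ℝ, (Real.exp (-a*t) * Real.sin (ω*t)) • bexp (-(t • ((ξ₁, ξ₂) : C2)))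
      = (((Real.exp (-a*t) * Real.sin (ω*t)) • Complex.exp (-((t:ℂ) * ξ₁)),
          (Real.exp (-a*t) * Real.sin (ω*t)) • Complex.exp (-((t:ℂ) * ξ₂))) : C2) := by
    intro t
    simp [bexp, Prod.smul_mk, Complex.real_smul]
  rw [laplace, integral_Ici_eq_integral_Ioi]
  rw [setIntegral_congr_fun measurableSet_Ioi (fun t _ => hcomp t)]
  rw [integral_pair (stmt17.keyInt a ω ξ₁ h1) (stmt17.keyInt a ω ξ₂ h2)]
  have hrhs : oc (ω : ℂ) * (((((ξ₁, ξ₂)) : C2) + oc (a : ℂ)) ^ 2 + oc (ω : ℂ) ^ 2)⁻¹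
      = (((ω : ℂ) * ((ξ₁ + a)^2 + (ω:ℂ)^2)⁻¹, (ω : ℂ) * ((ξ₂ + a)^2 + (ω:ℂ)^2)⁻¹) : C2) := by
    simp [oc, Prod.ext_iff, Prod.pow_mk]
  rw [hrhs, Prod.ext_iff]
  exact ⟨stmt17.key a ω ξ₁ h1, stmt17.key a ω ξ₂ h2⟩
end
end
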